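/- Let d ≥ 2 and let C > 0. For every set A ⊆ ℝ^d and every function f : A → ℝ satisfying |f(x) − f(y)| ≤ C‖x − y‖^d for all x, y ∈ A, the set f(A) ⊆ ℝ has Lebesgue measure zero. -/

import Mathlib

open MeasureTheory Set Metric Filter
open scoped ENNReal NNReal Topology

section Aux

variable {d : ℕ}

/-- Comparison of `d`-dimensional Hausdorff measure and Lebesgue measure on `ℝ^d`. -/
lemma sard_hausdorff_le_volume_aux (d : ℕ) :
    ∃ K : ℝ≥0∞, K ≠ ∞ ∧ ∀ s : Set (EuclideanSpace ℝ (Fin d)),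
      μH[(d : ℝ)] s ≤ K * volume s := by
  set K0 : ℝ≥0 := (Fintype.card (Fin d) : ℝ≥0) ^ ((1 / (2 : ℝ≥0∞)).toReal) with hK0
  refine ⟨(K0 : ℝ≥0∞) ^ (d : ℝ),
    ENNReal.rpow_ne_top_of_nonneg (by positivity) ENNReal.coe_ne_top, fun s => ?_⟩
  have hlip : LipschitzWith K0 ((WithLp.equiv 2 (Fin d → ℝ)).symm) :=
    PiLp.lipschitzWith_toLp 2 _
  have h1 : μH[(d : ℝ)] s
      = μH[(d : ℝ)] (((WithLp.equiv 2 (Fin d → ℝ)).symm) ''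
        ((WithLp.equiv 2 (Fin d → ℝ)) '' s)) := by
    rw [Equiv.symm_image_image]
  rw [h1]
  refine le_trans (hlip.hausdorffMeasure_image_le (by positivity) _) (le_of_eq ?_)
  congr 1
  have hcard : (d : ℝ) = (Fintype.card (Fin d) : ℝ) := by simp
  rw [hcard, hausdorffMeasure_pi_real]
  have hmp := (EuclideanSpace.volume_preserving_symm_measurableEquiv_toLp (Fin d)).symm
  rw [← hmp.map_eq, MeasurableEquiv.map_apply]
  congr 1
  exact (Equiv.image_eq_preimage_symm _ _)

/-- A pointwise power-modulus bound gives a bound of the Lebesgue measure of the image by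
the `d`-dimensional Hausdorff measure of the source. -/
lemma sard_volume_image_le (hd1 : 1 ≤ d) {c : ℝ} (hc : 0 ≤ c)
    {f : EuclideanSpace ℝ (Fin d) → ℝ} {s : Set (EuclideanSpace ℝ (Fin d))}
    (h : ∀ x ∈ s, ∀ y ∈ s, dist (f x) (f y) ≤ c * dist x y ^ d) :
    volume (f '' s) ≤ ENNReal.ofReal c * μH[(d : ℝ)] s := by
  have hdpos : (0 : ℝ≥0) < (d : ℝ≥0) := by exact_mod_cast hd1.trans_lt' Nat.zero_lt_one
  have hhold : HolderOnWith c.toNNReal (d : ℝ≥0) f s := by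
    intro x hx y hy
    rw [edist_dist, edist_dist]
    calc ENNReal.ofReal (dist (f x) (f y)) ≤ ENNReal.ofReal (c * dist x y ^ d) :=
          ENNReal.ofReal_le_ofReal (h x hx y hy)
      _ = ENNReal.ofReal c * ENNReal.ofReal (dist x y ^ d) := ENNReal.ofReal_mul hc
      _ = ↑c.toNNReal * ENNReal.ofReal (dist x y) ^ (((d : ℝ≥0)) : ℝ) := by
          rw [ENNReal.ofReal_pow dist_nonneg,
            ← ENNReal.rpow_natCast (ENNReal.ofReal (dist x y)) d]
          norm_num
          rfl
  have h2 := hhold.hausdorffMeasure_image_le hdpos (d := (1 : ℝ)) zero_le_one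
  rw [← hausdorffMeasure_real]
  refine h2.trans (le_of_eq ?_)
  have hind : (((d : ℝ≥0)) : ℝ) * 1 = (d : ℝ) := by push_cast; ring
  rw [ENNReal.rpow_one, hind]
  rfl

/-- If a quantitative density condition for `A` holds on the ball of radius `2ρ` around `x`,
then every ball of radius `ρ/N` centered within distance `ρ` of `x` meets `A`. -/
lemma sard_net_of_density {A : Set (EuclideanSpace ℝ (Fin d))} {N : ℕ} (hN : 1 ≤ N)
    {x : EuclideanSpace ℝ (Fin d)} {ρ : ℝ} (hρ : 0 < ρ)
    (hgood : volume (closedBall x (2 * ρ)) ≤ volume (A ∩ closedBall x (2 * ρ))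
      + ENNReal.ofReal ((1 / (2 * (N : ℝ))) ^ d / 2) * volume (closedBall x (2 * ρ)))
    {z : EuclideanSpace ℝ (Fin d)} (hz : dist z x ≤ ρ) :
    (A ∩ closedBall z (ρ / N)).Nonempty := by
  have hNR : (0 : ℝ) < N := by exact_mod_cast hN
  by_contra hcon
  rw [not_nonempty_iff_eq_empty] at hcon
  set Bz := closedBall z (ρ / N) with hBz
  set Bx := closedBall x (2 * ρ) with hBx
  have hN1 : (1 : ℝ) ≤ (N : ℝ) := by exact_mod_cast hN
  have hρN : ρ / N ≤ ρ := by
    rw [div_le_iff₀ hNR]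
    nlinarith [hρ.le, hN1]
  have hsubB : Bz ⊆ Bx := by
    intro w hw
    rw [hBx, mem_closedBall]
    calc dist w x ≤ dist w z + dist z x := dist_triangle _ _ _
      _ ≤ ρ / N + ρ := add_le_add hw hz
      _ ≤ 2 * ρ := by linarith
  have hsub : A ∩ Bx ⊆ Bx \ Bz := by
    rintro w ⟨hwA, hwB⟩
    refine ⟨hwB, fun hwz => ?_⟩
    have hmem : w ∈ A ∩ Bz := ⟨hwA, hwz⟩
    rw [hcon] at hmem
    exact hmem
  have hfr : Module.finrank ℝ (EuclideanSpace ℝ (Fin d)) = d := finrank_euclideanSpace_fin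
  have hVball : volume Bz
      = ENNReal.ofReal ((ρ / N) ^ d) * volume (ball (0 : EuclideanSpace ℝ (Fin d)) 1) := by
    rw [hBz, Measure.addHaar_closedBall _ _ (by positivity), hfr]
  have hVBx : volume Bx
      = ENNReal.ofReal ((2 * ρ) ^ d) * volume (ball (0 : EuclideanSpace ℝ (Fin d)) 1) := by
    rw [hBx, Measure.addHaar_closedBall _ _ (by positivity), hfr]
  have hbase : (1 / (2 * (N : ℝ))) * (2 * ρ) = ρ / N := by
    field_simp
  have hslack : ENNReal.ofReal ((1 / (2 * (N : ℝ))) ^ d / 2) * volume Bx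
      = ENNReal.ofReal ((ρ / N) ^ d / 2) * volume (ball (0 : EuclideanSpace ℝ (Fin d)) 1) := by
    rw [hVBx, ← mul_assoc, ← ENNReal.ofReal_mul (by positivity)]
    congr 2
    rw [div_mul_eq_mul_div, ← mul_pow, hbase]
  have hmb0 : volume (ball (0 : EuclideanSpace ℝ (Fin d)) 1) ≠ 0 :=
    (measure_ball_pos _ _ one_pos).ne'
  have hmbt : volume (ball (0 : EuclideanSpace ℝ (Fin d)) 1) ≠ ∞ := measure_ball_lt_top.ne
  have hba : ENNReal.ofReal ((ρ / N) ^ d / 2) * volume (ball (0 : EuclideanSpace ℝ (Fin d)) 1)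
      < volume Bz := by
    rw [hVball]
    refine ENNReal.mul_lt_mul_left hmb0 hmbt ?_
    refine (ENNReal.ofReal_lt_ofReal_iff (by positivity)).mpr ?_
    have hpos : (0 : ℝ) < (ρ / N) ^ d := by positivity
    linarith
  have hVAx : volume (A ∩ Bx) ≤ volume Bx - volume Bz := by
    refine le_trans (measure_mono hsub) ?_
    rw [measure_diff hsubB measurableSet_closedBall.nullMeasurableSet measure_closedBall_lt_top.ne]
  have hle : volume Bz ≤ volume Bx := measure_mono hsubB
  have hfin : volume Bx - volume Bz ≠ ∞ := (tsub_le_self.trans_lt measure_closedBall_lt_top).ne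
  have hcontra : volume Bx < volume Bx := by
    calc volume Bx ≤ volume (A ∩ Bx)
          + ENNReal.ofReal ((1 / (2 * (N : ℝ))) ^ d / 2) * volume Bx := hgood
      _ ≤ (volume Bx - volume Bz)
          + ENNReal.ofReal ((ρ / N) ^ d / 2)
            * volume (ball (0 : EuclideanSpace ℝ (Fin d)) 1) := by
          rw [hslack]
          exact add_le_add hVAx le_rfl
      _ < (volume Bx - volume Bz) + volume Bz := ENNReal.add_lt_add_left hfin hba
      _ = volume Bx := tsub_add_cancel_of_le hle
  exact absurd hcontra (lt_irrefl _)

/-- The chaining estimate: at a point where small balls at scale `dist x y / N` meet `A`,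
the modulus of continuity improves by a factor of essentially `1/N`. -/
lemma sard_chain_bound (hd : 2 ≤ d) {C : ℝ} (hC : 0 < C)
    {A : Set (EuclideanSpace ℝ (Fin d))} {f : EuclideanSpace ℝ (Fin d) → ℝ}
    (hf : ∀ x ∈ A, ∀ y ∈ A, dist (f x) (f y) ≤ C * dist x y ^ d)
    {N : ℕ} (hN : 1 ≤ N) {x y : EuclideanSpace ℝ (Fin d)} (hx : x ∈ A) (hy : y ∈ A)
    (hnet : ∀ z, dist z x ≤ dist x y → (A ∩ closedBall z (dist x y / N)).Nonempty) :
    dist (f x) (f y) ≤ 3 ^ (d + 1) * C / N * dist x y ^ d := by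
  classical
  have hNR : (0 : ℝ) < N := by exact_mod_cast hN
  set r := dist x y with hr
  have hr0 : 0 ≤ r := dist_nonneg
  set z : ℕ → EuclideanSpace ℝ (Fin d) := fun i => x + ((i : ℝ) / N) • (y - x) with hzdef
  have hzdist : ∀ i : ℕ, i ≤ N → dist (z i) x ≤ r := by
    intro i hi
    have he : z i - x = ((i : ℝ) / N) • (y - x) := by
      simp only [hzdef]
      exact add_sub_cancel_left x _
    rw [dist_eq_norm, he, norm_smul, Real.norm_eq_abs, abs_of_nonneg (by positivity)]
    have h1 : (i : ℝ) / N ≤ 1 := by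
      rw [div_le_one hNR]; exact_mod_cast hi
    calc (i : ℝ) / N * ‖y - x‖ ≤ 1 * ‖y - x‖ :=
          mul_le_mul_of_nonneg_right h1 (norm_nonneg _)
      _ = r := by rw [one_mul, hr, dist_comm, dist_eq_norm]
  have hzstep : ∀ i : ℕ, dist (z i) (z (i + 1)) = r / N := by
    intro i
    have he : z i - z (i + 1) = (((i : ℝ) / N) - (((i : ℝ) + 1) / N)) • (y - x) := by
      simp only [hzdef]
      rw [add_sub_add_left_eq_sub, ← sub_smul]
      norm_cast
    rw [dist_eq_norm, he]
    have h1 : ((i : ℝ) / N) - (((i : ℝ) + 1) / N) = -(1 / N) := by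
      field_simp
      ring
    rw [h1, norm_smul, Real.norm_eq_abs, abs_neg, abs_of_nonneg (by positivity)]
    rw [hr, dist_comm, dist_eq_norm]
    field_simp
  have hmem : ∀ i : ℕ, i ≤ N → (A ∩ closedBall (z i) (r / N)).Nonempty := fun i hi =>
    hnet (z i) (hzdist i hi)
  set a : ℕ → EuclideanSpace ℝ (Fin d) := fun i =>
    if h : (A ∩ closedBall (z i) (r / N)).Nonempty then h.some else x with hadef
  have ha : ∀ i : ℕ, i ≤ N → a i ∈ A ∧ dist (a i) (z i) ≤ r / N := by
    intro i hi
    have h := hmem i hi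
    rw [hadef]
    simp only [h, dif_pos]
    obtain ⟨h1, h2⟩ := h.some_mem
    exact ⟨h1, h2⟩
  have hstep : ∀ i : ℕ, i < N → dist (a i) (a (i + 1)) ≤ 3 * r / N := by
    intro i hi
    calc dist (a i) (a (i + 1))
        ≤ dist (a i) (z i) + dist (z i) (z (i + 1)) + dist (z (i + 1)) (a (i + 1)) :=
          dist_triangle4 _ _ _ _
      _ ≤ r / N + r / N + r / N := by
          refine add_le_add (add_le_add (ha i hi.le).2 (hzstep i).le) ?_
          rw [dist_comm]
          exact (ha (i + 1) hi).2
      _ = 3 * r / N := by ring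
  have hpair : ∀ u v : EuclideanSpace ℝ (Fin d), u ∈ A → v ∈ A → dist u v ≤ 3 * r / N →
      dist (f u) (f v) ≤ C * (3 * r / N) ^ d := by
    intro u v hu hv huv
    refine (hf u hu v hv).trans ?_
    exact mul_le_mul_of_nonneg_left (pow_le_pow_left₀ dist_nonneg huv d) hC.le
  have hz0 : z 0 = x := by
    rw [hzdef]; simp
  have hzN : z N = y := by
    rw [hzdef]
    simp only [Nat.cast_id]
    rw [div_self hNR.ne', one_smul]
    abel
  have hrN3 : r / N ≤ 3 * r / N := by
    have h1 : 0 ≤ r / N := by positivity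
    have h2 : 3 * r / N = 3 * (r / N) := by ring
    linarith [h2]
  have hend0 : dist x (a 0) ≤ 3 * r / N := by
    have h1 := (ha 0 (Nat.zero_le N)).2
    rw [hz0] at h1
    rw [dist_comm]
    exact h1.trans hrN3
  have hendN : dist (a N) y ≤ 3 * r / N := by
    have h1 := (ha N le_rfl).2
    rw [hzN] at h1
    exact h1.trans hrN3
  have hmid : dist (f (a 0)) (f (a N)) ≤ (N : ℝ) * (C * (3 * r / N) ^ d) := by
    refine le_trans (dist_le_range_sum_dist (fun i => f (a i)) N) ?_
    refine le_trans (Finset.sum_le_card_nsmul (Finset.range N) _ (C * (3 * r / N) ^ d) ?_) ?_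
    · intro i hi
      rw [Finset.mem_range] at hi
      exact hpair _ _ (ha i hi.le).1 (ha (i + 1) hi).1 (hstep i hi)
    · rw [Finset.card_range, nsmul_eq_mul]
  have htotal : dist (f x) (f y) ≤ ((N : ℝ) + 2) * (C * (3 * r / N) ^ d) := by
    calc dist (f x) (f y)
        ≤ dist (f x) (f (a 0)) + dist (f (a 0)) (f (a N)) + dist (f (a N)) (f y) :=
          dist_triangle4 _ _ _ _
      _ ≤ C * (3 * r / N) ^ d + (N : ℝ) * (C * (3 * r / N) ^ d) + C * (3 * r / N) ^ d := by
          refine add_le_add (add_le_add ?_ hmid) ?_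
          · exact hpair _ _ hx (ha 0 (Nat.zero_le N)).1 hend0
          · exact hpair _ _ (ha N le_rfl).1 hy hendN
      _ = ((N : ℝ) + 2) * (C * (3 * r / N) ^ d) := by ring
  refine htotal.trans ?_
  have hN1 : (1 : ℝ) ≤ N := by exact_mod_cast hN
  have h32 : ((N : ℝ) + 2) * (C * (3 * r / N) ^ d) ≤ 3 * (N : ℝ) * (C * (3 * r / N) ^ d) := by
    refine mul_le_mul_of_nonneg_right ?_ (by positivity)
    linarith
  refine h32.trans ?_
  -- final algebra
  have hNd : (0 : ℝ) < (N : ℝ) ^ d := by positivity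
  have e1 : (3 * r / (N : ℝ)) ^ d = 3 ^ d * r ^ d / (N : ℝ) ^ d := by
    rw [div_pow, mul_pow]
  rw [e1, pow_succ]
  rw [show 3 * (N : ℝ) * (C * (3 ^ d * r ^ d / (N : ℝ) ^ d))
      = (3 * (N : ℝ) * C * (3 ^ d * r ^ d)) / (N : ℝ) ^ d by ring,
    show (3 : ℝ) ^ d * 3 * C / (N : ℝ) * r ^ d = (3 * C * (3 ^ d * r ^ d)) / (N : ℝ) by ring]
  rw [div_le_div_iff₀ hNd hNR]
  have h2 : (N : ℝ) * (N : ℝ) ≤ (N : ℝ) ^ d := by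
    calc (N : ℝ) * (N : ℝ) = (N : ℝ) ^ 2 := (sq (N : ℝ)).symm
      _ ≤ (N : ℝ) ^ d := pow_le_pow_right₀ hN1 hd
  calc 3 * (N : ℝ) * C * (3 ^ d * r ^ d) * (N : ℝ)
      = ((N : ℝ) * (N : ℝ)) * (3 * C * (3 ^ d * r ^ d)) := by ring
    _ ≤ (N : ℝ) ^ d * (3 * C * (3 ^ d * r ^ d)) :=
        mul_le_mul_of_nonneg_right h2 (by positivity)
    _ = 3 * C * (3 ^ d * r ^ d) * (N : ℝ) ^ d := by ring

end Aux

/-- If `f : A → ℝ`, `A ⊆ ℝ^d`, satisfies `|f x − f y| ≤ C‖x − y‖^d`, then `f(A)`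
has Lebesgue measure zero. -/
theorem sard_of_pow_modulus (d : ℕ) (hd : 2 ≤ d) (C : ℝ) (hC : 0 < C)
    (A : Set (EuclideanSpace ℝ (Fin d))) (f : EuclideanSpace ℝ (Fin d) → ℝ)
    (hf : ∀ x ∈ A, ∀ y ∈ A, |f x - f y| ≤ C * ‖x - y‖ ^ d) :
    volume (f '' A) = 0 := by
  classical
  have hd1 : 1 ≤ d := hd.trans' one_le_two
  have hf' : ∀ x ∈ A, ∀ y ∈ A, dist (f x) (f y) ≤ C * dist x y ^ d := by
    intro x hx y hy
    rw [Real.dist_eq, dist_eq_norm]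
    exact hf x hx y hy
  obtain ⟨K, hKtop, hK⟩ := sard_hausdorff_le_volume_aux d
  have hae := Besicovitch.ae_tendsto_measure_inter_div
    (volume : Measure (EuclideanSpace ℝ (Fin d))) A
  set T : Set (EuclideanSpace ℝ (Fin d)) :=
    {x | Tendsto (fun r => volume (A ∩ closedBall x r) / volume (closedBall x r))
      (𝓝[>] 0) (𝓝 1)} with hT
  have h0 : (volume.restrict A) Tᶜ = 0 := by
    rw [hT, compl_setOf]
    exact ae_iff.mp hae
  set N' := toMeasurable (volume.restrict A) Tᶜ with hN'
  have hN'meas : MeasurableSet N' := measurableSet_toMeasurable _ _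
  have hTsub : Tᶜ ⊆ N' := subset_toMeasurable _ _
  have hN'null : volume (N' ∩ A) = 0 := by
    have h1 : (volume.restrict A) N' = 0 := by rw [hN', measure_toMeasurable]; exact h0
    rwa [Measure.restrict_apply hN'meas] at h1
  set A₁ := A ∩ N' with hA₁
  set A₂ := A \ N' with hA₂
  have hA12 : A ⊆ A₁ ∪ A₂ := by
    intro x hx
    by_cases h : x ∈ N'
    · exact Or.inl ⟨hx, h⟩
    · exact Or.inr ⟨hx, h⟩
  have hA₂T : ∀ x ∈ A₂, x ∈ T := by
    intro x hx
    by_contra h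
    exact hx.2 (hTsub h)
  -- Part 1: the null part of `A`
  have part1 : volume (f '' A₁) = 0 := by
    have hv : volume A₁ = 0 := by rw [hA₁, inter_comm]; exact hN'null
    have hH : μH[(d : ℝ)] A₁ = 0 := by
      refine le_antisymm ?_ zero_le
      refine le_trans (hK A₁) ?_
      rw [hv, mul_zero]
    have h1 := sard_volume_image_le hd1 hC.le (s := A₁) (f := f)
      (fun x hx y hy => hf' x hx.1 y hy.1)
    rw [hH, mul_zero] at h1
    exact le_antisymm h1 zero_le
  -- Part 2: the density points
  have part2 : volume (f '' A₂) = 0 := by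
    have key : ∀ R : ℕ, volume (f '' (A₂ ∩ closedBall 0 (R : ℝ))) = 0 := by
      intro R
      set M : ℝ≥0∞ := K * volume (closedBall (0 : EuclideanSpace ℝ (Fin d)) (R : ℝ)) with hM
      have hMtop : M ≠ ∞ := ENNReal.mul_ne_top hKtop measure_closedBall_lt_top.ne
      have main : ∀ n : ℕ, volume (f '' (A₂ ∩ closedBall 0 (R : ℝ)))
          ≤ ENNReal.ofReal (3 ^ (d + 1) * C / ((n : ℝ) + 1)) * M := by
        intro n
        set εn : ℝ := (1 / (2 * ((n : ℝ) + 1))) ^ d / 2 with hεn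
        have hεnpos : 0 < εn := by rw [hεn]; positivity
        set S : ℕ → Set (EuclideanSpace ℝ (Fin d)) := fun k =>
          {x | x ∈ A ∧ ∀ r : ℝ, 0 < r → r ≤ 2 / ((k : ℝ) + 1) →
            volume (closedBall x r) ≤ volume (A ∩ closedBall x r)
              + ENNReal.ofReal εn * volume (closedBall x r)} with hS
        have hSA : ∀ k, S k ⊆ A := fun k x hx => hx.1
        have hSmono : Monotone S := by
          intro k l hkl x hx
          refine ⟨hx.1, fun r hr hrl => hx.2 r hr (hrl.trans ?_)⟩
          have hkl' : ((k : ℝ) + 1) ≤ ((l : ℝ) + 1) := by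
            have : (k : ℝ) ≤ (l : ℝ) := by exact_mod_cast hkl
            linarith
          rw [div_le_div_iff₀ (by positivity) (by positivity)]
          nlinarith
        -- every density point is in some `S k`
        have hcover : A₂ ∩ closedBall 0 (R : ℝ) ⊆ ⋃ k, S k ∩ closedBall 0 (R : ℝ) := by
          rintro x ⟨hxA₂, hxB⟩
          have hxT : x ∈ T := hA₂T x hxA₂
          rw [hT, mem_setOf_eq] at hxT
          have hlt : (1 : ℝ≥0∞) - ENNReal.ofReal εn < 1 :=
            ENNReal.sub_lt_self ENNReal.one_ne_top one_ne_zero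
              (by simpa [ENNReal.ofReal_eq_zero, not_le] using hεnpos)
          have hev := hxT.eventually (eventually_ge_nhds hlt)
          rw [eventually_iff, Metric.mem_nhdsWithin_iff] at hev
          obtain ⟨δ, hδpos, hδ⟩ := hev
          obtain ⟨k, hk⟩ := exists_nat_gt (2 / δ)
          refine mem_iUnion.2 ⟨k, ⟨⟨hxA₂.1, fun r hr hrk => ?_⟩, hxB⟩⟩
          have hrδ : r < δ := by
            have h1 : (0 : ℝ) < (k : ℝ) + 1 := by positivity
            have h2 : 2 / ((k : ℝ) + 1) < δ := by
              rw [div_lt_iff₀ h1]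
              have h3 : 2 / δ < (k : ℝ) + 1 := by
                have : (k : ℝ) ≤ (k : ℝ) + 1 := by linarith
                linarith
              rw [div_lt_iff₀ hδpos] at h3
              linarith
            linarith
          have hrmem : r ∈ ball (0 : ℝ) δ ∩ Ioi 0 := by
            constructor
            · rw [mem_ball, Real.dist_eq, sub_zero, abs_of_pos hr]; exact hrδ
            · exact hr
          have hratio := hδ hrmem
          -- from the ratio bound to the additive bound
          set V := volume (closedBall x r) with hV
          have hV0 : V ≠ 0 := (measure_closedBall_pos _ _ hr).ne'
          have hVtop : V ≠ ∞ := measure_closedBall_lt_top.ne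
          have hmul : (1 - ENNReal.ofReal εn) * V ≤ volume (A ∩ closedBall x r) := by
            rw [← ENNReal.le_div_iff_mul_le (Or.inl hV0) (Or.inl hVtop)]
            exact hratio
          have hε1 : ENNReal.ofReal εn ≤ 1 := by
            rw [ENNReal.ofReal_le_one]
            rw [hεn]
            have hb : (1 / (2 * ((n : ℝ) + 1))) ≤ 1 := by
              rw [div_le_one (by positivity)]
              have : (0 : ℝ) ≤ (n : ℝ) := Nat.cast_nonneg n
              linarith
            have hb0 : (0 : ℝ) ≤ 1 / (2 * ((n : ℝ) + 1)) := by positivity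
            have hple : (1 / (2 * ((n : ℝ) + 1))) ^ d ≤ 1 := pow_le_one₀ hb0 hb
            linarith
          calc V = ((1 - ENNReal.ofReal εn) + ENNReal.ofReal εn) * V := by
                rw [tsub_add_cancel_of_le hε1, one_mul]
            _ = (1 - ENNReal.ofReal εn) * V + ENNReal.ofReal εn * V := add_mul _ _ _
            _ ≤ volume (A ∩ closedBall x r) + ENNReal.ofReal εn * V :=
                add_le_add hmul le_rfl
        -- uniform bound over the good sets
        have hbound : ∀ k : ℕ, volume (f '' (S k ∩ closedBall 0 (R : ℝ)))
            ≤ ENNReal.ofReal (3 ^ (d + 1) * C / ((n : ℝ) + 1)) * M := by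
          intro k
          set δ : ℝ := 1 / (2 * ((k : ℝ) + 1)) with hδ
          have hδpos : 0 < δ := by rw [hδ]; positivity
          set u := TopologicalSpace.denseSeq (EuclideanSpace ℝ (Fin d)) with hu
          set P : ℕ → Set (EuclideanSpace ℝ (Fin d)) :=
            disjointed (fun j => closedBall (u j) δ) with hP
          have hPmeas : ∀ j, MeasurableSet (P j) :=
            MeasurableSet.disjointed (fun j => measurableSet_closedBall)
          have hPdisj : Pairwise (Function.onFun Disjoint P) := disjoint_disjointed _
          have hPuniv : (⋃ j, P j) = univ := by
            rw [hP, iUnion_disjointed]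
            apply eq_univ_of_forall
            intro p
            obtain ⟨j, hj⟩ :=
              (TopologicalSpace.denseRange_denseSeq (EuclideanSpace ℝ (Fin d))).exists_dist_lt
                p hδpos
            exact mem_iUnion.2 ⟨j, mem_closedBall.2 hj.le⟩
          have hPdiam : ∀ j, ∀ x ∈ P j, ∀ y ∈ P j, dist x y ≤ 1 / ((k : ℝ) + 1) := by
            intro j x hxj y hyj
            have hx' := disjointed_subset _ _ hxj
            have hy' := disjointed_subset _ _ hyj
            rw [mem_closedBall] at hx' hy'
            calc dist x y ≤ dist x (u j) + dist (u j) y := dist_triangle _ _ _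
              _ ≤ δ + δ := add_le_add hx' (by rw [dist_comm]; exact hy')
              _ = 1 / ((k : ℝ) + 1) := by
                  rw [hδ, ← add_div, div_eq_div_iff (by positivity) (by positivity)]
                  ring
          have hc0 : (0 : ℝ) ≤ 3 ^ (d + 1) * C / ((n : ℝ) + 1) := by positivity
          have hpiece : ∀ j, volume (f '' (S k ∩ closedBall 0 (R : ℝ) ∩ P j))
              ≤ ENNReal.ofReal (3 ^ (d + 1) * C / ((n : ℝ) + 1))
                * μH[(d : ℝ)] (S k ∩ closedBall 0 (R : ℝ) ∩ P j) := by
            intro j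
            refine sard_volume_image_le hd1 hc0 ?_
            rintro x ⟨⟨hxS, _⟩, hxP⟩ y ⟨⟨hyS, _⟩, hyP⟩
            have hxy : dist x y ≤ 1 / ((k : ℝ) + 1) := hPdiam j x hxP y hyP
            have hnet : ∀ zz, dist zz x ≤ dist x y →
                (A ∩ closedBall zz (dist x y / (n + 1 : ℕ))).Nonempty := by
              intro zz hzz
              rcases eq_or_lt_of_le (dist_nonneg (x := x) (y := y)) with h0 | hpos
              · have hzx : zz = x := by
                  have h1 : dist zz x ≤ 0 := by rw [← h0] at hzz; exact hzz
                  exact dist_le_zero.mp h1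
                refine ⟨x, hxS.1, ?_⟩
                rw [hzx, mem_closedBall, dist_self]
                positivity
              · have h2r : 0 < 2 * dist x y := by linarith
                have h2rk : 2 * dist x y ≤ 2 / ((k : ℝ) + 1) := by
                  rw [div_eq_mul_one_div]
                  nlinarith [hxy]
                have hx2 := hxS.2 (2 * dist x y) h2r h2rk
                refine sard_net_of_density (N := n + 1) (Nat.le_add_left 1 n) hpos ?_ hzz
                convert hx2 using 4
                rw [hεn]
                push_cast
                ring
            have hb := sard_chain_bound hd hC hf' (N := n + 1) (Nat.le_add_left 1 n)
              (hSA k hxS) (hSA k hyS) hnet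
            refine hb.trans (le_of_eq ?_)
            push_cast
            ring
          calc volume (f '' (S k ∩ closedBall 0 (R : ℝ)))
              ≤ volume (⋃ j, f '' (S k ∩ closedBall 0 (R : ℝ) ∩ P j)) := by
                refine measure_mono ?_
                rw [← image_iUnion]
                apply image_mono
                intro p hp
                have hpu : p ∈ ⋃ j, P j := by rw [hPuniv]; trivial
                obtain ⟨j, hj⟩ := mem_iUnion.1 hpu
                exact mem_iUnion.2 ⟨j, hp, hj⟩
            _ ≤ ∑' j, volume (f '' (S k ∩ closedBall 0 (R : ℝ) ∩ P j)) := measure_iUnion_le _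
            _ ≤ ∑' j, ENNReal.ofReal (3 ^ (d + 1) * C / ((n : ℝ) + 1))
                  * μH[(d : ℝ)] (S k ∩ closedBall 0 (R : ℝ) ∩ P j) :=
                ENNReal.tsum_le_tsum hpiece
            _ = ENNReal.ofReal (3 ^ (d + 1) * C / ((n : ℝ) + 1))
                  * ∑' j, μH[(d : ℝ)] (S k ∩ closedBall 0 (R : ℝ) ∩ P j) :=
                ENNReal.tsum_mul_left
            _ ≤ ENNReal.ofReal (3 ^ (d + 1) * C / ((n : ℝ) + 1)) * M := by
                refine mul_le_mul_right ?_ _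
                calc ∑' j, μH[(d : ℝ)] (S k ∩ closedBall 0 (R : ℝ) ∩ P j)
                    ≤ ∑' j, μH[(d : ℝ)] (P j ∩ closedBall 0 (R : ℝ)) := by
                      refine ENNReal.tsum_le_tsum fun j => measure_mono ?_
                      intro p hp
                      exact ⟨hp.2, hp.1.2⟩
                  _ = μH[(d : ℝ)] (⋃ j, P j ∩ closedBall 0 (R : ℝ)) :=
                      (measure_iUnion
                        (fun i j hij => (hPdisj hij).mono inter_subset_left inter_subset_left)
                        (fun j => (hPmeas j).inter measurableSet_closedBall)).symm
                  _ ≤ K * volume (closedBall (0 : EuclideanSpace ℝ (Fin d)) (R : ℝ)) := by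
                      refine le_trans (measure_mono ?_) (hK _)
                      intro p hp
                      obtain ⟨j, hj⟩ := mem_iUnion.1 hp
                      exact hj.2
                  _ = M := hM.symm
        calc volume (f '' (A₂ ∩ closedBall 0 (R : ℝ)))
            ≤ volume (⋃ k, f '' (S k ∩ closedBall 0 (R : ℝ))) := by
              refine measure_mono ?_
              refine subset_trans (image_mono hcover) ?_
              rw [image_iUnion]
          _ = ⨆ k, volume (f '' (S k ∩ closedBall 0 (R : ℝ))) :=
              Monotone.measure_iUnion (fun k l hkl =>
                image_mono (inter_subset_inter_left _ (hSmono hkl)))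
          _ ≤ ENNReal.ofReal (3 ^ (d + 1) * C / ((n : ℝ) + 1)) * M := iSup_le hbound
      -- let `n → ∞`
      have hlim : Tendsto (fun n : ℕ => ENNReal.ofReal (3 ^ (d + 1) * C / ((n : ℝ) + 1)) * M)
          atTop (𝓝 0) := by
        have h1 : Tendsto (fun n : ℕ => 3 ^ (d + 1) * C / ((n : ℝ) + 1)) atTop (𝓝 0) := by
          have h2 := tendsto_one_div_add_atTop_nhds_zero_nat.const_mul (3 ^ (d + 1) * C)
          rw [mul_zero] at h2
          refine h2.congr fun n => ?_
          rw [mul_one_div]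
        have h2 : Tendsto (fun n : ℕ => ENNReal.ofReal (3 ^ (d + 1) * C / ((n : ℝ) + 1)))
            atTop (𝓝 0) := by
          have h3 := ENNReal.tendsto_ofReal h1
          rwa [ENNReal.ofReal_zero] at h3
        have h4 := ENNReal.Tendsto.mul_const h2 (Or.inr hMtop)
        rwa [zero_mul] at h4
      have hle0 : volume (f '' (A₂ ∩ closedBall 0 (R : ℝ))) ≤ 0 := ge_of_tendsto' hlim main
      exact le_antisymm hle0 zero_le
    have hUn : A₂ ⊆ ⋃ R : ℕ, A₂ ∩ closedBall 0 (R : ℝ) := by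
      intro x hx
      obtain ⟨R, hR⟩ := exists_nat_ge ‖x‖
      refine mem_iUnion.2 ⟨R, hx, ?_⟩
      rw [mem_closedBall, dist_zero_right]
      exact hR
    refine le_antisymm ?_ zero_le
    refine le_trans (measure_mono (image_mono hUn)) ?_
    rw [image_iUnion]
    exact le_of_eq (measure_iUnion_null key)
  have himg : f '' A ⊆ f '' A₁ ∪ f '' A₂ := by
    rw [← image_union]
    exact image_mono hA12
  exact measure_mono_null himg (measure_union_null part1 part2)
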